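/- arXiv:1304.1770 — 6 statements merged into one kernel-verified Lean document; each statement's English description precedes it below -/
import Mathlib

section
/- Let G and H be groups and let f₁, f₂ : H → G be group homomorphisms, defining an action of H on G by h ∗ g = f₁(h) · g · f₂(h)⁻¹. This action is effectively free (i.e., whenever some h ∈ H fixes some point g ∈ G, then h fixes every point of G) if and only if for every h ∈ H, if f₁(h) is conjugate to f₂(h) in G, then f₁(h) = f₂(h) and f₁(h) lies in the center of G. -/
/-- The biquotient action of `H` on `G` induced by `f₁ f₂ : H →* G`,
namely `h ∗ g = f₁ h * g * (f₂ h)⁻¹`, is effectively free (any element fixing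
some point fixes every point) iff whenever `f₁ h` is conjugate to `f₂ h` in `G`,
we have `f₁ h = f₂ h` and this element is central. -/
theorem biquotient_effectively_free_iff {G H : Type*} [Group G] [Group H]
    (f₁ f₂ : H →* G) :
    (∀ h : H, (∃ g : G, f₁ h * g * (f₂ h)⁻¹ = g) → ∀ g : G, f₁ h * g * (f₂ h)⁻¹ = g) ↔
      (∀ h : H, (∃ u : G, u * f₁ h * u⁻¹ = f₂ h) →
        f₁ h = f₂ h ∧ f₁ h ∈ Subgroup.center G) := by
  constructor
  · intro hfree h ⟨u, hu⟩
    have hfix : f₁ h * u⁻¹ * (f₂ h)⁻¹ = u⁻¹ := by rw [← hu]; group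
    have hall := hfree h ⟨u⁻¹, hfix⟩
    have h1 := hall 1
    simp only [mul_one] at h1
    have heq : f₁ h = f₂ h := by
      rw [mul_inv_eq_iff_eq_mul, one_mul] at h1; exact h1
    refine ⟨heq, Subgroup.mem_center_iff.mpr fun g => ?_⟩
    have hg := hall g
    rw [heq, mul_inv_eq_iff_eq_mul] at hg
    rw [heq, hg]
  · intro hc h ⟨g, hg⟩ g'
    rw [mul_inv_eq_iff_eq_mul] at hg
    have hu : g⁻¹ * f₁ h * g⁻¹⁻¹ = f₂ h := by
      rw [inv_inv, mul_assoc, hg]; group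
    obtain ⟨heq, hz⟩ := hc h ⟨g⁻¹, hu⟩
    rw [heq, ← Subgroup.mem_center_iff.mp (heq ▸ hz) g', mul_inv_cancel_right]
end

section
/- Let ν, α, β, γ, δ, κ be integers with gcd(ν, α, γ) = 1 and gcd(κ, β, δ) = 1. Consider the T² = S¹ × S¹ action on S³ × S³ given by (z, w) ∗ ((p₁, q₁), (p₂, q₂)) = ((z^ν p₁, z^α w^β q₁), (w^κ p₂, z^γ w^δ q₂)). If this action is effectively free, then |ν| = 1 and |κ| = 1. -/
/-- The unit 3-sphere `S³ = {(p, q) ∈ ℂ² : |p|² + |q|² = 1}`. -/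
def Sphere3 : Set (ℂ × ℂ) := {p | ‖p.1‖ ^ 2 + ‖p.2‖ ^ 2 = 1}

lemma circle_coe_zpow (z : Circle) (n : ℤ) : ((z ^ n : Circle) : ℂ) = (z : ℂ) ^ n :=
  map_zpow Circle.coeHom z n

/-- If `|ν| ≠ 1`, there is a nontrivial element of the circle whose `ν`-th power is `1`. -/
lemma exists_bad (ν : ℤ) (h : ν.natAbs ≠ 1) : ∃ z : Circle, z ≠ 1 ∧ z ^ ν = 1 := by
  rcases eq_or_ne ν 0 with rfl | hν0
  · refine ⟨Circle.exp Real.pi, ?_, zpow_zero _⟩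
    intro hc
    have : ((Circle.exp Real.pi : Circle) : ℂ) = 1 := by rw [hc]; rfl
    rw [Circle.coe_exp, Complex.exp_pi_mul_I] at this
    norm_num at this
  · have hνc : ((ν : ℂ)) ≠ 0 := Int.cast_ne_zero.mpr hν0
    have hπI : (2 * (Real.pi:ℂ) * Complex.I) ≠ 0 := by
      simp [Real.pi_ne_zero, Complex.I_ne_zero]
    refine ⟨Circle.exp (2 * Real.pi / ν), ?_, ?_⟩
    · intro hc
      have hco : ((Circle.exp (2 * Real.pi / ν) : Circle) : ℂ) = 1 := by rw [hc]; rfl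
      rw [Circle.coe_exp, Complex.exp_eq_one_iff] at hco
      obtain ⟨n, hn⟩ := hco
      push_cast at hn
      have h3 : ((n * ν - 1 : ℤ) : ℂ) * (2 * Real.pi * Complex.I) = 0 := by
        field_simp at hn
        push_cast
        linear_combination (-2 * (Real.pi:ℂ) * Complex.I) * hn
      rcases mul_eq_zero.mp h3 with h4 | h4
      · have h5 : n * ν = 1 := by
          have : ((n * ν - 1 : ℤ) : ℂ) = 0 := h4
          have := (Int.cast_injective (α := ℂ)) (by simpa using this : ((n*ν-1 : ℤ):ℂ) = ((0:ℤ):ℂ))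
          omega
        exact h (Int.isUnit_iff_natAbs_eq.mp (IsUnit.of_mul_eq_one (a := ν) n (mul_comm n ν ▸ h5)))
      · exact hπI h4
    · apply Circle.coe_injective
      rw [circle_coe_zpow, Circle.coe_exp, Circle.coe_one, ← Complex.exp_int_mul]
      rw [show ((ν:ℂ) * (((2 * Real.pi / ν : ℝ):ℂ) * Complex.I)) = 2 * Real.pi * Complex.I by
        push_cast; field_simp]
      exact Complex.exp_two_pi_mul_I

/-- If `z^ν = z^α = z^γ = 1` and `gcd(ν, α, γ) = 1`, then `z = 1`. -/
lemma triv_of_gcd (z : Circle) (ν α γ : ℤ) (h : Int.gcd ν (Int.gcd α γ : ℤ) = 1)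
    (hν : z ^ ν = 1) (hα : z ^ α = 1) (hγ : z ^ γ = 1) : z = 1 := by
  have hb1 : (Int.gcd ν (Int.gcd α γ : ℤ) : ℤ) = ν * Int.gcdA ν (Int.gcd α γ : ℤ)
      + (Int.gcd α γ : ℤ) * Int.gcdB ν (Int.gcd α γ : ℤ) := Int.gcd_eq_gcd_ab _ _
  have hb2 : (Int.gcd α γ : ℤ) = α * Int.gcdA α γ + γ * Int.gcdB α γ := Int.gcd_eq_gcd_ab _ _
  set x := Int.gcdA ν (Int.gcd α γ : ℤ)
  set y := Int.gcdB ν (Int.gcd α γ : ℤ)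
  set u := Int.gcdA α γ
  set v := Int.gcdB α γ
  have key : (1 : ℤ) = ν * x + α * (u * y) + γ * (v * y) := by
    rw [h] at hb1; push_cast at hb1; rw [hb2] at hb1; linarith [hb1]
  calc z = z ^ (1 : ℤ) := (zpow_one z).symm
    _ = (z ^ ν) ^ x * ((z ^ α) ^ (u * y) * (z ^ γ) ^ (v * y)) := by
        rw [← zpow_mul, ← zpow_mul, ← zpow_mul, ← zpow_add, ← zpow_add]
        congr 1
        omega
    _ = 1 := by rw [hν, hα, hγ]; simp

/-- If the `T²` action on `S³ × S³` given by
`(z, w) ∗ ((p₁, q₁), (p₂, q₂)) = ((z^ν p₁, z^α w^β q₁), (w^κ p₂, z^γ w^δ q₂))`,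
with `gcd(ν, α, γ) = gcd(κ, β, δ) = 1`, is effectively free, then `|ν| = |κ| = 1`. -/
theorem effectively_free_torus_action_nu_kappa_one (ν α β γ δ κ : ℤ)
    (h1 : Int.gcd ν (Int.gcd α γ : ℤ) = 1) (h2 : Int.gcd κ (Int.gcd β δ : ℤ) = 1)
    (hfree : ∀ z w : Circle,
      (∃ p₁ q₁ p₂ q₂ : ℂ, (p₁, q₁) ∈ Sphere3 ∧ (p₂, q₂) ∈ Sphere3 ∧
        ((z ^ ν : Circle) : ℂ) * p₁ = p₁ ∧ ((z ^ α * w ^ β : Circle) : ℂ) * q₁ = q₁ ∧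
        ((w ^ κ : Circle) : ℂ) * p₂ = p₂ ∧ ((z ^ γ * w ^ δ : Circle) : ℂ) * q₂ = q₂) →
      (∀ p₁ q₁ p₂ q₂ : ℂ, (p₁, q₁) ∈ Sphere3 → (p₂, q₂) ∈ Sphere3 →
        ((z ^ ν : Circle) : ℂ) * p₁ = p₁ ∧ ((z ^ α * w ^ β : Circle) : ℂ) * q₁ = q₁ ∧
        ((w ^ κ : Circle) : ℂ) * p₂ = p₂ ∧ ((z ^ γ * w ^ δ : Circle) : ℂ) * q₂ = q₂)) :
    ν.natAbs = 1 ∧ κ.natAbs = 1 := by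
  have hmem10 : ((1 : ℂ), (0 : ℂ)) ∈ Sphere3 := by simp [Sphere3]
  have hmem01 : ((0 : ℂ), (1 : ℂ)) ∈ Sphere3 := by simp [Sphere3]
  constructor
  · by_contra hn
    obtain ⟨z, hz1, hzν⟩ := exists_bad ν hn
    have hall := hfree z 1
      ⟨1, 0, 1, 0, hmem10, hmem10, by rw [hzν]; simp, by simp, by simp, by simp⟩
    obtain ⟨-, hq₁, -, hq₂⟩ := hall 0 1 0 1 hmem01 hmem01
    have hα : z ^ α = 1 := by
      rw [one_zpow, mul_one, mul_one, Circle.coe_eq_one] at hq₁; exact hq₁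
    have hγ : z ^ γ = 1 := by
      rw [one_zpow, mul_one, mul_one, Circle.coe_eq_one] at hq₂; exact hq₂
    exact hz1 (triv_of_gcd z ν α γ h1 hzν hα hγ)
  · by_contra hn
    obtain ⟨w, hw1, hwκ⟩ := exists_bad κ hn
    have hall := hfree 1 w
      ⟨1, 0, 1, 0, hmem10, hmem10, by simp, by simp, by rw [hwκ]; simp, by simp⟩
    obtain ⟨-, hq₁, -, hq₂⟩ := hall 0 1 0 1 hmem01 hmem01
    have hβ : w ^ β = 1 := by
      rw [one_zpow, one_mul, mul_one, Circle.coe_eq_one] at hq₁; exact hq₁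
    have hδ : w ^ δ = 1 := by
      rw [one_zpow, one_mul, mul_one, Circle.coe_eq_one] at hq₂; exact hq₂
    exact hw1 (triv_of_gcd w κ β δ h2 hwκ hβ hδ)
end

section
/- Let a, b, c, d be integers and consider the S¹ action on SU(2) × SU(2) given by z ∗ (A, B) = (D(z^a) · A · D(z^c)⁻¹, D(z^b) · B · D(z^d)⁻¹). An element z ∈ S¹ fixes some point of SU(2) × SU(2) under this action if and only if there exist signs ε, ε' ∈ {1, −1} such that z^(a + εc) = 1 and z^(b + ε'd) = 1. -/
open Matrix

noncomputable def DMat (u : Circle) : Matrix (Fin 2) (Fin 2) ℂ :=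
  Matrix.diagonal ![(u : ℂ), (starRingEnd ℂ) (u : ℂ)]

lemma DMat_mul (u v : Circle) : DMat u * DMat v = DMat (u * v) := by
  ext i j
  fin_cases i <;> fin_cases j <;>
    simp [DMat, Matrix.mul_apply, Matrix.diagonal, Fin.sum_univ_two]

lemma DMat_one : DMat 1 = 1 := by
  simp only [DMat]
  have : ![(1:ℂ), (starRingEnd ℂ) 1] = fun _ => 1 := by funext i; fin_cases i <;> simp
  rw [Circle.coe_one, this, Matrix.diagonal_one]

lemma DMat_inv (u : Circle) : (DMat u)⁻¹ = DMat u⁻¹ := by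
  apply Matrix.inv_eq_right_inv
  rw [DMat_mul, mul_inv_cancel, DMat_one]

lemma key (u v : Circle) :
    (∃ A, A ∈ Matrix.specialUnitaryGroup (Fin 2) ℂ ∧ DMat u * A * (DMat v)⁻¹ = A) ↔
    (u * v⁻¹ = 1 ∨ u * v = 1) := by
  constructor
  · rintro ⟨A, hA, hEq⟩
    have hdet : A.det = 1 := ((Matrix.mem_specialUnitaryGroup_iff).mp hA).2
    rw [Matrix.det_fin_two] at hdet
    rw [DMat_inv] at hEq
    have h' : DMat u * A = A * DMat v := by
      calc DMat u * A = DMat u * A * DMat v⁻¹ * DMat v := by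
            rw [mul_assoc, mul_assoc, DMat_mul, inv_mul_cancel, DMat_one, mul_one]
        _ = A * DMat v := by rw [hEq]
    have hent : ∀ i j, (DMat u) i i * A i j = A i j * (DMat v) j j := by
      intro i j
      have := congrFun (congrFun h' i) j
      simpa [DMat, Matrix.diagonal_mul, Matrix.mul_diagonal, mul_comm] using this
    have h00 := hent 0 0
    have h01 := hent 0 1
    have h10 := hent 1 0
    have h11 := hent 1 1
    simp only [DMat, Matrix.diagonal, Matrix.of_apply] at h00 h01 h10 h11
    simp at h00 h01 h10 h11
    -- h00 : u * A 0 0 = A 0 0 * v etc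
    by_cases h0 : A 0 0 * A 1 1 = 0
    · have h1 : A 0 1 * A 1 0 ≠ 0 := by
        intro hc; rw [h0, hc] at hdet; norm_num at hdet
      have hβ : A 0 1 ≠ 0 := left_ne_zero_of_mul h1
      right
      have hcv : (u : ℂ) = (starRingEnd ℂ) (v : ℂ) := by
        have h01' : A 0 1 * (u : ℂ) = A 0 1 * (starRingEnd ℂ) (v : ℂ) := by
          rw [mul_comm] at h01; exact h01
        exact mul_left_cancel₀ hβ h01'
      have huv : u = v⁻¹ := Subtype.ext (by rw [Circle.coe_inv_eq_conj]; exact hcv)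
      rw [huv, inv_mul_cancel]
    · have hα : A 0 0 ≠ 0 := left_ne_zero_of_mul h0
      left
      have hcv : (u : ℂ) = (v : ℂ) := by
        have h00' : A 0 0 * (u : ℂ) = A 0 0 * (v : ℂ) := by
          rw [mul_comm] at h00; exact h00
        exact mul_left_cancel₀ hα h00'
      have huv : u = v := Subtype.ext hcv
      rw [huv, mul_inv_cancel]
  · rintro (h | h)
    · have huv : u = v := by
        exact mul_inv_eq_one.mp h
      refine ⟨1, ?_, ?_⟩
      · exact Submonoid.one_mem _
      · rw [mul_one, huv, DMat_inv, DMat_mul, mul_inv_cancel, DMat_one]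
    · refine ⟨!![0, 1; -1, 0], ?_, ?_⟩
      · rw [Matrix.mem_specialUnitaryGroup_iff]
        constructor
        · rw [Matrix.mem_unitaryGroup_iff]
          ext i j
          fin_cases i <;> fin_cases j <;>
            simp [Matrix.mul_apply, Fin.sum_univ_two, Matrix.conjTranspose_apply, Matrix.one_apply]
        · norm_num [Matrix.det_fin_two_of]
      · have hv : v = u⁻¹ := eq_inv_of_mul_eq_one_right h
        subst hv
        rw [DMat_inv, inv_inv]
        ext i j
        fin_cases i <;> fin_cases j <;>
          simp [DMat, Matrix.mul_apply, Fin.sum_univ_two, Matrix.diagonal, ← Circle.coe_inv_eq_conj,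
            ← Circle.coe_mul, mul_inv_cancel, inv_mul_cancel]

lemma zpow_cases (a c : ℤ) (z : Circle) :
    (z ^ a * (z ^ c)⁻¹ = 1 ∨ z ^ a * z ^ c = 1) ↔
    (∃ ε : ℤ, (ε = 1 ∨ ε = -1) ∧ z ^ (a + ε * c) = 1) := by
  have e1 : z ^ (a + 1 * c) = z ^ a * z ^ c := by rw [one_mul, _root_.zpow_add]
  have e2 : z ^ (a + (-1) * c) = z ^ a * (z ^ c)⁻¹ := by
    rw [neg_one_mul, ← sub_eq_add_neg, _root_.zpow_sub]
  constructor
  · rintro (h | h)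
    · exact ⟨-1, Or.inr rfl, by rw [e2]; exact h⟩
    · exact ⟨1, Or.inl rfl, by rw [e1]; exact h⟩
  · rintro ⟨ε, (rfl | rfl), h⟩
    · right; rw [← e1]; exact h
    · left; rw [← e2]; exact h

/-- Under the `S¹` action on `SU(2) × SU(2)` given by
`z ∗ (A, B) = (D(z^a) A D(z^c)⁻¹, D(z^b) B D(z^d)⁻¹)`, an element `z` fixes some
point iff there are signs `ε, ε' ∈ {1, −1}` with `z^(a+εc) = 1` and `z^(b+ε'd) = 1`. -/
theorem circle_action_fixes_point_iff (a b c d : ℤ) (z : Circle) :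
    (∃ A B : Matrix (Fin 2) (Fin 2) ℂ,
      A ∈ Matrix.specialUnitaryGroup (Fin 2) ℂ ∧ B ∈ Matrix.specialUnitaryGroup (Fin 2) ℂ ∧
      DMat (z ^ a) * A * (DMat (z ^ c))⁻¹ = A ∧ DMat (z ^ b) * B * (DMat (z ^ d))⁻¹ = B) ↔
    (∃ ε ε' : ℤ, (ε = 1 ∨ ε = -1) ∧ (ε' = 1 ∨ ε' = -1) ∧
      z ^ (a + ε * c) = 1 ∧ z ^ (b + ε' * d) = 1) := by
  have split : (∃ A B : Matrix (Fin 2) (Fin 2) ℂ,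
      A ∈ Matrix.specialUnitaryGroup (Fin 2) ℂ ∧ B ∈ Matrix.specialUnitaryGroup (Fin 2) ℂ ∧
      DMat (z ^ a) * A * (DMat (z ^ c))⁻¹ = A ∧ DMat (z ^ b) * B * (DMat (z ^ d))⁻¹ = B) ↔
      (∃ A, A ∈ Matrix.specialUnitaryGroup (Fin 2) ℂ ∧ DMat (z ^ a) * A * (DMat (z ^ c))⁻¹ = A) ∧
      (∃ B, B ∈ Matrix.specialUnitaryGroup (Fin 2) ℂ ∧ DMat (z ^ b) * B * (DMat (z ^ d))⁻¹ = B) := by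
    constructor
    · rintro ⟨A, B, h1, h2, h3, h4⟩; exact ⟨⟨A, h1, h3⟩, ⟨B, h2, h4⟩⟩
    · rintro ⟨⟨A, h1, h3⟩, ⟨B, h2, h4⟩⟩; exact ⟨A, B, h1, h2, h3, h4⟩
  rw [split, key, key, zpow_cases a c z, zpow_cases b d z]
  constructor
  · rintro ⟨⟨ε, hε, h1⟩, ⟨ε', hε', h2⟩⟩; exact ⟨ε, ε', hε, hε', h1, h2⟩
  · rintro ⟨ε, ε', hε, hε', h1, h2⟩; exact ⟨⟨ε, hε, h1⟩, ⟨ε', hε', h2⟩⟩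
end

section
/- Let a, b, c, d be integers. Then: (i) gcd(a + εc, b + ε'd) = 1 for every choice of signs ε, ε' ∈ {1, −1} if and only if gcd(a² − c², b² − d²) = 1; and (ii) gcd(a + εc, b + ε'd) = 2 for every choice of signs ε, ε' ∈ {1, −1} if and only if gcd(a² − c², b² − d²) = 4. -/
private lemma dvd_sq_diff (a c ε : ℤ) (hε : ε = 1 ∨ ε = -1) :
    (a + ε * c) ∣ a ^ 2 - c ^ 2 := by
  rcases hε with rfl | rfl
  · exact ⟨a - c, by ring⟩
  · exact ⟨a + c, by ring⟩

private lemma pick_sign {p a c : ℤ} (hp : Prime p) (h : p ∣ a ^ 2 - c ^ 2) :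
    ∃ ε, (ε = 1 ∨ ε = -1) ∧ p ∣ a + ε * c := by
  have h' : p ∣ (a + c) * (a - c) := by
    rw [show (a + c) * (a - c) = a ^ 2 - c ^ 2 by ring]; exact h
  rcases hp.dvd_mul.mp h' with h | h
  · exact ⟨1, Or.inl rfl, by simpa using h⟩
  · exact ⟨-1, Or.inr rfl, by rw [show a + (-1) * c = a - c by ring]; exact h⟩

private lemma zero_sign {a c : ℤ} (h : a ^ 2 - c ^ 2 = 0) :
    ∃ ε, (ε = 1 ∨ ε = -1) ∧ a + ε * c = 0 := by
  have h' : (a + c) * (a - c) = 0 := by linear_combination h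
  rcases mul_eq_zero.mp h' with h | h
  · exact ⟨1, Or.inl rfl, by linarith⟩
  · exact ⟨-1, Or.inr rfl, by linarith⟩

private lemma two_dvd_sign {a c : ℤ} (h : (4:ℤ) ∣ a ^ 2 - c ^ 2) (ε : ℤ)
    (hε : ε = 1 ∨ ε = -1) : (2:ℤ) ∣ a + ε * c := by
  have h2 : Even (a ^ 2 - c ^ 2) :=
    even_iff_two_dvd.mpr (dvd_trans ⟨2, by norm_num⟩ h)
  rw [Int.even_sub] at h2
  simp only [Int.even_pow] at h2
  have h3 : Even a ↔ Even c := by tauto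
  rcases hε with rfl | rfl
  · rw [show a + 1 * c = a + c by ring, ← even_iff_two_dvd, Int.even_add]
    exact h3
  · rw [show a + (-1) * c = a - c by ring, ← even_iff_two_dvd, Int.even_sub]
    exact h3

/-- For integers `a, b, c, d`:
(i) `gcd(a + εc, b + ε'd) = 1` for all signs `ε, ε' ∈ {1, −1}` iff
`gcd(a² − c², b² − d²) = 1`; and
(ii) `gcd(a + εc, b + ε'd) = 2` for all signs iff `gcd(a² − c², b² − d²) = 4`. -/
theorem gcd_signs_iff_gcd_squares (a b c d : ℤ) :
    ((∀ ε ε' : ℤ, (ε = 1 ∨ ε = -1) → (ε' = 1 ∨ ε' = -1) →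
        Int.gcd (a + ε * c) (b + ε' * d) = 1) ↔
      Int.gcd (a ^ 2 - c ^ 2) (b ^ 2 - d ^ 2) = 1) ∧
    ((∀ ε ε' : ℤ, (ε = 1 ∨ ε = -1) → (ε' = 1 ∨ ε' = -1) →
        Int.gcd (a + ε * c) (b + ε' * d) = 2) ↔
      Int.gcd (a ^ 2 - c ^ 2) (b ^ 2 - d ^ 2) = 4) := by
  constructor
  · -- Part (i)
    constructor
    · intro h
      by_contra hN
      rcases Nat.eq_zero_or_pos (Int.gcd (a ^ 2 - c ^ 2) (b ^ 2 - d ^ 2)) with h0 | hpos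
      · obtain ⟨hA, hB⟩ := Int.gcd_eq_zero_iff.mp h0
        obtain ⟨ε, hε, hε0⟩ := zero_sign hA
        obtain ⟨ε', hε', hε'0⟩ := zero_sign hB
        have := h ε ε' hε hε'
        rw [hε0, hε'0] at this
        simp at this
      · obtain ⟨p, hp, hpN⟩ := Nat.exists_prime_and_dvd hN
        have hpz : Prime (p : ℤ) := Nat.prime_iff_prime_int.mp hp
        have hpA : (p : ℤ) ∣ a ^ 2 - c ^ 2 :=
          dvd_trans (Int.natCast_dvd_natCast.mpr hpN) (Int.gcd_dvd_left _ _)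
        have hpB : (p : ℤ) ∣ b ^ 2 - d ^ 2 :=
          dvd_trans (Int.natCast_dvd_natCast.mpr hpN) (Int.gcd_dvd_right _ _)
        obtain ⟨ε, hε, hεd⟩ := pick_sign hpz hpA
        obtain ⟨ε', hε', hε'd⟩ := pick_sign hpz hpB
        have hd : (p : ℤ) ∣ (Int.gcd (a + ε * c) (b + ε' * d) : ℤ) :=
          Int.dvd_coe_gcd hεd hε'd
        rw [h ε ε' hε hε'] at hd
        have : p ∣ 1 := by exact_mod_cast hd
        exact hp.one_lt.ne' (Nat.dvd_one.mp this)
    · intro h ε ε' hε hε'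
      have hA : (Int.gcd (a + ε * c) (b + ε' * d) : ℤ) ∣ a ^ 2 - c ^ 2 :=
        dvd_trans (Int.gcd_dvd_left _ _) (dvd_sq_diff a c ε hε)
      have hB : (Int.gcd (a + ε * c) (b + ε' * d) : ℤ) ∣ b ^ 2 - d ^ 2 :=
        dvd_trans (Int.gcd_dvd_right _ _) (dvd_sq_diff b d ε' hε')
      have := Int.dvd_coe_gcd hA hB
      rw [h] at this
      have : Int.gcd (a + ε * c) (b + ε' * d) ∣ 1 := by exact_mod_cast this
      exact Nat.dvd_one.mp this
  · -- Part (ii)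
    constructor
    · intro h
      -- 2 divides all four quantities
      have e1 : (2:ℤ) ∣ a + c := by
        have h11 := h 1 1 (Or.inl rfl) (Or.inl rfl)
        have := @Int.gcd_dvd_left (a + 1 * c) (b + 1 * d)
        rw [h11] at this
        simpa using this
      have e2 : (2:ℤ) ∣ a - c := by
        have h11 := h (-1) 1 (Or.inr rfl) (Or.inl rfl)
        have := @Int.gcd_dvd_left (a + (-1) * c) (b + 1 * d)
        rw [h11] at this
        rw [show a + (-1) * c = a - c by ring] at this
        exact_mod_cast this
      have e3 : (2:ℤ) ∣ b + d := by
        have h11 := h 1 1 (Or.inl rfl) (Or.inl rfl)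
        have := @Int.gcd_dvd_right (a + 1 * c) (b + 1 * d)
        rw [h11] at this
        simpa using this
      have e4 : (2:ℤ) ∣ b - d := by
        have h11 := h 1 (-1) (Or.inl rfl) (Or.inr rfl)
        have := @Int.gcd_dvd_right (a + 1 * c) (b + (-1) * d)
        rw [h11] at this
        rw [show b + (-1) * d = b - d by ring] at this
        exact_mod_cast this
      obtain ⟨x, hx⟩ := e1
      obtain ⟨y, hy⟩ := e2
      obtain ⟨u, hu⟩ := e3
      obtain ⟨v, hv⟩ := e4
      have hAxy : a ^ 2 - c ^ 2 = 4 * (x * y) := by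
        linear_combination (a - c) * hx + 2 * x * hy
      have hBuv : b ^ 2 - d ^ 2 = 4 * (u * v) := by
        linear_combination (b - d) * hu + 2 * u * hv
      have hN0 : Int.gcd (a ^ 2 - c ^ 2) (b ^ 2 - d ^ 2) ≠ 0 := by
        intro h0
        obtain ⟨hA, hB⟩ := Int.gcd_eq_zero_iff.mp h0
        obtain ⟨ε, hε, hε0⟩ := zero_sign hA
        obtain ⟨ε', hε', hε'0⟩ := zero_sign hB
        have := h ε ε' hε hε'
        rw [hε0, hε'0] at this
        simp at this
      have h4 : 4 ∣ Int.gcd (a ^ 2 - c ^ 2) (b ^ 2 - d ^ 2) := by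
        have hd : (4:ℤ) ∣ (Int.gcd (a ^ 2 - c ^ 2) (b ^ 2 - d ^ 2) : ℤ) :=
          Int.dvd_coe_gcd ⟨x * y, hAxy⟩ ⟨u * v, hBuv⟩
        exact_mod_cast hd
      obtain ⟨k, hk⟩ := h4
      have hk1 : k = 1 := by
        by_contra hknot
        obtain ⟨q, hq, hqk⟩ := Nat.exists_prime_and_dvd hknot
        have hqz : Prime (q : ℤ) := Nat.prime_iff_prime_int.mp hq
        have h4qN : (4 * q : ℕ) ∣ Int.gcd (a ^ 2 - c ^ 2) (b ^ 2 - d ^ 2) := by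
          rw [hk]; exact mul_dvd_mul_left 4 hqk
        have h4qA : ((4 * q : ℕ) : ℤ) ∣ a ^ 2 - c ^ 2 :=
          dvd_trans (Int.natCast_dvd_natCast.mpr h4qN) (Int.gcd_dvd_left _ _)
        have h4qB : ((4 * q : ℕ) : ℤ) ∣ b ^ 2 - d ^ 2 :=
          dvd_trans (Int.natCast_dvd_natCast.mpr h4qN) (Int.gcd_dvd_right _ _)
        have hqxy : (q : ℤ) ∣ x * y := by
          have h' : (4:ℤ) * q ∣ 4 * (x * y) := by
            rw [← hAxy]; exact_mod_cast h4qA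
          exact (mul_dvd_mul_iff_left (by norm_num : (4:ℤ) ≠ 0)).mp h'
        have hquv : (q : ℤ) ∣ u * v := by
          have h' : (4:ℤ) * q ∣ 4 * (u * v) := by
            rw [← hBuv]; exact_mod_cast h4qB
          exact (mul_dvd_mul_iff_left (by norm_num : (4:ℤ) ≠ 0)).mp h'
        -- get signs ε, ε' with 2q ∣ a + εc and 2q ∣ b + ε'd
        have hA2q : ∃ ε, (ε = 1 ∨ ε = -1) ∧ (2 * (q:ℤ)) ∣ a + ε * c := by
          rcases hqz.dvd_mul.mp hqxy with hqx | hqy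
          · exact ⟨1, Or.inl rfl, by
              rw [show a + 1 * c = a + c by ring, hx]
              exact mul_dvd_mul_left 2 hqx⟩
          · exact ⟨-1, Or.inr rfl, by
              rw [show a + (-1) * c = a - c by ring, hy]
              exact mul_dvd_mul_left 2 hqy⟩
        have hB2q : ∃ ε', (ε' = 1 ∨ ε' = -1) ∧ (2 * (q:ℤ)) ∣ b + ε' * d := by
          rcases hqz.dvd_mul.mp hquv with hqu | hqv
          · exact ⟨1, Or.inl rfl, by
              rw [show b + 1 * d = b + d by ring, hu]
              exact mul_dvd_mul_left 2 hqu⟩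
          · exact ⟨-1, Or.inr rfl, by
              rw [show b + (-1) * d = b - d by ring, hv]
              exact mul_dvd_mul_left 2 hqv⟩
        obtain ⟨ε, hε, hεd⟩ := hA2q
        obtain ⟨ε', hε', hε'd⟩ := hB2q
        have hd : (2 * (q:ℤ)) ∣ (Int.gcd (a + ε * c) (b + ε' * d) : ℤ) :=
          Int.dvd_coe_gcd hεd hε'd
        rw [h ε ε' hε hε'] at hd
        have hd' : 2 * q ∣ 2 := by exact_mod_cast hd
        have := Nat.le_of_dvd (by norm_num) hd'
        have := hq.two_le
        omega
      omega
    · intro h ε ε' hε hε'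
      have h4A : (4:ℤ) ∣ a ^ 2 - c ^ 2 := by
        have := @Int.gcd_dvd_left (a ^ 2 - c ^ 2) (b ^ 2 - d ^ 2)
        rw [h] at this
        exact_mod_cast this
      have h4B : (4:ℤ) ∣ b ^ 2 - d ^ 2 := by
        have := @Int.gcd_dvd_right (a ^ 2 - c ^ 2) (b ^ 2 - d ^ 2)
        rw [h] at this
        exact_mod_cast this
      set g := Int.gcd (a + ε * c) (b + ε' * d) with hg
      -- g divides 4
      have hgA : (g : ℤ) ∣ a ^ 2 - c ^ 2 :=
        dvd_trans (Int.gcd_dvd_left _ _) (dvd_sq_diff a c ε hε)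
      have hgB : (g : ℤ) ∣ b ^ 2 - d ^ 2 :=
        dvd_trans (Int.gcd_dvd_right _ _) (dvd_sq_diff b d ε' hε')
      have hg4 : g ∣ 4 := by
        have := Int.dvd_coe_gcd hgA hgB
        rw [h] at this
        exact_mod_cast this
      -- 2 divides g
      have h2g : 2 ∣ g := by
        have hd : (2:ℤ) ∣ (g : ℤ) :=
          Int.dvd_coe_gcd (two_dvd_sign h4A ε hε) (two_dvd_sign h4B ε' hε')
        exact_mod_cast hd
      -- g ≠ 4
      have hgne : g ≠ 4 := by
        intro hg4eq
        have h4a : (4:ℤ) ∣ a + ε * c := by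
          have := @Int.gcd_dvd_left (a + ε * c) (b + ε' * d)
          rw [← hg, hg4eq] at this
          exact_mod_cast this
        have h4b : (4:ℤ) ∣ b + ε' * d := by
          have := @Int.gcd_dvd_right (a + ε * c) (b + ε' * d)
          rw [← hg, hg4eq] at this
          exact_mod_cast this
        have h2a : (2:ℤ) ∣ a + (-ε) * c := by
          apply two_dvd_sign h4A
          rcases hε with rfl | rfl
          · right; norm_num
          · left; norm_num
        have h2b : (2:ℤ) ∣ b + (-ε') * d := by
          apply two_dvd_sign h4B
          rcases hε' with rfl | rfl
          · right; norm_num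
          · left; norm_num
        have h8A : (8:ℤ) ∣ a ^ 2 - c ^ 2 := by
          obtain ⟨s, hs⟩ := h4a
          obtain ⟨t, ht⟩ := h2a
          refine ⟨s * t, ?_⟩
          rcases hε with rfl | rfl
          · linear_combination (a - c) * hs + 4 * s * ht
          · linear_combination (a + c) * hs + 4 * s * ht
        have h8B : (8:ℤ) ∣ b ^ 2 - d ^ 2 := by
          obtain ⟨s, hs⟩ := h4b
          obtain ⟨t, ht⟩ := h2b
          refine ⟨s * t, ?_⟩
          rcases hε' with rfl | rfl
          · linear_combination (b - d) * hs + 4 * s * ht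
          · linear_combination (b + d) * hs + 4 * s * ht
        have := Int.dvd_coe_gcd h8A h8B
        rw [h] at this
        norm_num at this
      -- conclude g = 2
      have hle := Nat.le_of_dvd (by norm_num) hg4
      have hg0 : g ≠ 0 := by
        intro h0
        rw [h0] at hg4
        norm_num at hg4
      omega
end

section
/- Let a, b, c, d be integers with gcd(a, b, c, d) = 1 and gcd(a + εc, b + ε'd) = 2 for every choice of signs ε, ε' ∈ {1, −1} (so a ± c and b ± d are even). Then the S¹ action on U(2) × U(2) given by z ∗ (A, B) = (diag(z^a, 1) · A · diag(z^((a+c)/2), z^((a−c)/2))⁻¹, diag(z^b, 1) · B · diag(z^((b+d)/2), z^((b−d)/2))⁻¹) is free: if some z ∈ S¹ fixes some point (A, B) ∈ U(2) × U(2), then z = 1. -/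
open Matrix

lemma aux_col (A : Matrix (Fin 2) (Fin 2) ℂ) (hA : A ∈ Matrix.unitaryGroup (Fin 2) ℂ)
    (j : Fin 2) : A 0 j ≠ 0 ∨ A 1 j ≠ 0 := by
  by_contra h
  push_neg at h
  have h1 : star A * A = 1 := hA.1
  have := congrFun (congrFun h1 j) j
  simp [Matrix.mul_apply, Fin.sum_univ_two, Matrix.star_apply, h.1, h.2,
    Matrix.one_apply] at this

lemma single (w : ℂ) (hw : w ≠ 0) (e p q : ℤ) (hpq : e = p + q)
    (A : Matrix (Fin 2) (Fin 2) ℂ) (hA : A ∈ Matrix.unitaryGroup (Fin 2) ℂ)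
    (h : Matrix.diagonal ![w ^ e, 1] * A * (Matrix.diagonal ![w ^ p, w ^ q])⁻¹ = A) :
    w ^ p = 1 ∨ w ^ q = 1 := by
  have hdet : IsUnit (Matrix.diagonal ![w ^ p, w ^ q]).det := by
    rw [Matrix.det_diagonal, Fin.prod_univ_two]
    simp only [Matrix.cons_val_zero, Matrix.cons_val_one, Matrix.head_cons]
    exact (isUnit_iff_ne_zero).2 (mul_ne_zero (zpow_ne_zero _ hw) (zpow_ne_zero _ hw))
  have h' : Matrix.diagonal ![w ^ e, 1] * A = A * Matrix.diagonal ![w ^ p, w ^ q] := by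
    calc Matrix.diagonal ![w ^ e, 1] * A
        = Matrix.diagonal ![w ^ e, 1] * A * (Matrix.diagonal ![w ^ p, w ^ q])⁻¹ *
            Matrix.diagonal ![w ^ p, w ^ q] := by
          rw [Matrix.nonsing_inv_mul_cancel_right _ _ hdet]
      _ = A * Matrix.diagonal ![w ^ p, w ^ q] := by rw [h]
  have key : ∀ i j : Fin 2, (![w ^ e, 1] i) * A i j = A i j * (![w ^ p, w ^ q] j) := by
    intro i j
    have := congrFun (congrFun h' i) j
    rw [Matrix.diagonal_mul, Matrix.mul_diagonal] at this
    exact this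
  rcases aux_col A hA 0 with h0 | h0
  · -- A 0 0 ≠ 0 : w^e = w^p, so w^q = 1
    have := key 0 0
    simp only [Matrix.cons_val_zero] at this
    have hep : w ^ e = w ^ p := by
      rw [mul_comm (A 0 0) (w ^ p)] at this
      exact mul_right_cancel₀ h0 this
    right
    have : w ^ p * w ^ q = w ^ p * 1 := by
      rw [mul_one, ← zpow_add₀ hw, ← hpq, hep]
    exact mul_left_cancel₀ (zpow_ne_zero _ hw) this
  · -- A 1 0 ≠ 0 : w^p = 1
    have := key 1 0
    simp only [Matrix.cons_val_zero, Matrix.cons_val_one, Matrix.head_cons, one_mul] at this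
    left
    have := this.symm
    nth_rewrite 2 [← mul_one (A 1 0)] at this
    exact (mul_left_cancel₀ h0 this)

lemma circle_eq_one (z : Circle) (m n : ℤ) (h : Int.gcd m n = 1)
    (hm : z ^ m = 1) (hn : z ^ n = 1) : z = 1 := by
  have hb := Int.gcd_eq_gcd_ab m n
  rw [h] at hb
  calc z = z ^ (1 : ℤ) := (zpow_one z).symm
    _ = (z ^ m) ^ Int.gcdA m n * (z ^ n) ^ Int.gcdB m n := by
        rw [← _root_.zpow_mul, ← _root_.zpow_mul, ← _root_.zpow_add]
        norm_cast at hb ⊢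
        rw [← hb]
        rfl
    _ = 1 := by rw [hm, hn, _root_.one_zpow, _root_.one_zpow, one_mul]

/-- If `gcd(a, b, c, d) = 1` and `gcd(a + εc, b + ε'd) = 2` for every choice of
signs (so `a ± c` and `b ± d` are even), then the `S¹` action on `U(2) × U(2)`
given by
`z ∗ (A, B) = (diag(z^a, 1)·A·diag(z^((a+c)/2), z^((a−c)/2))⁻¹,
               diag(z^b, 1)·B·diag(z^((b+d)/2), z^((b−d)/2))⁻¹)`
is free: any `z` fixing some point is `1`. -/
theorem circle_action_on_U2_free (a b c d : ℤ)
    (hgcd : Int.gcd a (Int.gcd b (Int.gcd c d : ℤ) : ℤ) = 1)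
    (h2 : ∀ ε ε' : ℤ, (ε = 1 ∨ ε = -1) → (ε' = 1 ∨ ε' = -1) →
      Int.gcd (a + ε * c) (b + ε' * d) = 2) :
    ∀ z : Circle, ∀ A B : Matrix (Fin 2) (Fin 2) ℂ,
      A ∈ Matrix.unitaryGroup (Fin 2) ℂ → B ∈ Matrix.unitaryGroup (Fin 2) ℂ →
      (Matrix.diagonal ![((z ^ a : Circle) : ℂ), 1] * A *
          (Matrix.diagonal ![((z ^ ((a + c) / 2) : Circle) : ℂ),
            ((z ^ ((a - c) / 2) : Circle) : ℂ)])⁻¹ = A ∧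
        Matrix.diagonal ![((z ^ b : Circle) : ℂ), 1] * B *
          (Matrix.diagonal ![((z ^ ((b + d) / 2) : Circle) : ℂ),
            ((z ^ ((b - d) / 2) : Circle) : ℂ)])⁻¹ = B) →
      z = 1 := by
  intro z A B hA hB ⟨hfA, hfB⟩
  have hac : (2:ℤ) ∣ a + c := by
    have this : (Int.gcd (a + 1 * c) (b + 1 * d) : ℤ) ∣ (a + 1 * c) := Int.gcd_dvd_left _ _
    rw [h2 1 1 (Or.inl rfl) (Or.inl rfl)] at this
    have : (2:ℤ) ∣ a + 1 * c := by exact_mod_cast this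
    omega
  have hac' : (2:ℤ) ∣ a - c := by
    have this : (Int.gcd (a + (-1) * c) (b + 1 * d) : ℤ) ∣ (a + (-1) * c) := Int.gcd_dvd_left _ _
    rw [h2 (-1) 1 (Or.inr rfl) (Or.inl rfl)] at this
    have : (2:ℤ) ∣ a + (-1) * c := by exact_mod_cast this
    omega
  have hbd : (2:ℤ) ∣ b + d := by
    have this : (Int.gcd (a + 1 * c) (b + 1 * d) : ℤ) ∣ (b + 1 * d) := Int.gcd_dvd_right _ _
    rw [h2 1 1 (Or.inl rfl) (Or.inl rfl)] at this
    have : (2:ℤ) ∣ b + 1 * d := by exact_mod_cast this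
    omega
  have hbd' : (2:ℤ) ∣ b - d := by
    have this : (Int.gcd (a + 1 * c) (b + (-1) * d) : ℤ) ∣ (b + (-1) * d) := Int.gcd_dvd_right _ _
    rw [h2 1 (-1) (Or.inl rfl) (Or.inr rfl)] at this
    have : (2:ℤ) ∣ b + (-1) * d := by exact_mod_cast this
    omega
  set w : ℂ := (z : ℂ) with hwdef
  have hw : w ≠ 0 := Circle.coe_ne_zero z
  have hcoe : ∀ n : ℤ, ((z ^ n : Circle) : ℂ) = w ^ n := fun n => by exact_mod_cast rfl
  have hcup : ∀ n : ℤ, w ^ n = 1 → z ^ n = 1 := by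
    intro n hn
    apply Circle.ext
    rw [hcoe n] at *
    simpa [hcoe n] using hn
  have hA' : w ^ ((a + c) / 2) = 1 ∨ w ^ ((a - c) / 2) = 1 := by
    apply single w hw a _ _ (by omega) A hA
    simpa [hcoe] using hfA
  have hB' : w ^ ((b + d) / 2) = 1 ∨ w ^ ((b - d) / 2) = 1 := by
    apply single w hw b _ _ (by omega) B hB
    simpa [hcoe] using hfB
  -- gcd of halves = 1 for each sign combination
  have key : ∀ (ε ε' : ℤ), (ε = 1 ∨ ε = -1) → (ε' = 1 ∨ ε' = -1) →
      Int.gcd ((a + ε * c) / 2) ((b + ε' * d) / 2) = 1 := by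
    intro ε ε' hε hε'
    have hg := h2 ε ε' hε hε'
    have h1 : a + ε * c = 2 * ((a + ε * c) / 2) := by
      rcases hε with rfl | rfl <;> omega
    have h1' : b + ε' * d = 2 * ((b + ε' * d) / 2) := by
      rcases hε' with rfl | rfl <;> omega
    rw [h1, h1', Int.gcd_mul_left] at hg
    simpa using hg
  rcases hA' with hA' | hA' <;> rcases hB' with hB' | hB'
  · exact circle_eq_one z _ _ (by simpa using key 1 1 (Or.inl rfl) (Or.inl rfl))
      (hcup _ hA') (hcup _ hB')
  · refine circle_eq_one z _ _ ?_ (hcup _ hA') (hcup _ hB')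
    have := key 1 (-1) (Or.inl rfl) (Or.inr rfl)
    simpa [sub_eq_add_neg, neg_mul, one_mul] using this
  · refine circle_eq_one z _ _ ?_ (hcup _ hA') (hcup _ hB')
    have := key (-1) 1 (Or.inr rfl) (Or.inl rfl)
    simpa [sub_eq_add_neg, neg_mul, one_mul] using this
  · refine circle_eq_one z _ _ ?_ (hcup _ hA') (hcup _ hB')
    have := key (-1) (-1) (Or.inr rfl) (Or.inr rfl)
    simpa [sub_eq_add_neg, neg_mul, one_mul] using this
end

section
/- Let a, b, c, d be integers such that a ± c and b ± d are all even. For every (A, B) ∈ SU(2) × SU(2), the orbit of (A, B) under the S¹ action on U(2) × U(2) given by z ∗ (A, B) = (diag(z^a, 1) · A · diag(z^((a+c)/2), z^((a−c)/2))⁻¹, diag(z^b, 1) · B · diag(z^((b+d)/2), z^((b−d)/2))⁻¹) equals, as a set of pairs of matrices, the orbit of (A, B) under the S¹ action z ∗ (A, B) = (D(z^a) · A · D(z^c)⁻¹, D(z^b) · B · D(z^d)⁻¹); in particular this orbit is contained in SU(2) × SU(2). -/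
open Matrix

lemma diag2_inv (u v : Circle) :
    (Matrix.diagonal ![(u : ℂ), (v : ℂ)])⁻¹ =
      Matrix.diagonal ![((u⁻¹ : Circle) : ℂ), ((v⁻¹ : Circle) : ℂ)] := by
  apply Matrix.inv_eq_right_inv
  ext i j
  fin_cases i <;> fin_cases j <;>
    simp [Matrix.mul_apply, Matrix.diagonal, Fin.sum_univ_succ, mul_inv_cancel₀]

lemma DMat_eq (u : Circle) :
    DMat u = Matrix.diagonal ![(u : ℂ), ((u⁻¹ : Circle) : ℂ)] := by
  rw [DMat, Circle.coe_inv_eq_conj]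

lemma DMat_mem (u : Circle) : DMat u ∈ Matrix.specialUnitaryGroup (Fin 2) ℂ := by
  rw [Matrix.mem_specialUnitaryGroup_iff]
  constructor
  · rw [Matrix.mem_unitaryGroup_iff]
    ext i j
    fin_cases i <;> fin_cases j <;>
      simp [DMat, Matrix.mul_apply, Matrix.diagonal, Fin.sum_univ_succ,
        Matrix.star_apply, Complex.mul_conj, Complex.mul_conj', mul_comm]
  · simp [DMat, Matrix.det_diagonal, Fin.prod_univ_succ, Complex.mul_conj]

lemma sq_surj (z : Circle) : ∃ w : Circle, w ^ 2 = z := by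
  obtain ⟨t, -, ht⟩ := Circle.surjOn_exp_neg_pi_pi (Set.mem_univ z)
  exact ⟨Circle.exp (t / 2), by rw [sq, ← Circle.exp_add, add_halves, ht]⟩

lemma scalar_shift (w : Circle) (x : ℂ) (e f g h : ℤ) (hef : e + f = g + h) :
    ((w ^ e : Circle) : ℂ) * x * ((w ^ f : Circle) : ℂ) =
      ((w ^ g : Circle) : ℂ) * x * ((w ^ h : Circle) : ℂ) := by
  rw [mul_right_comm ((w ^ e : Circle) : ℂ) x, mul_right_comm ((w ^ g : Circle) : ℂ) x,
    ← Circle.coe_mul, ← Circle.coe_mul, ← _root_.zpow_add, ← _root_.zpow_add, hef]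

lemma key_s18 (a c : ℤ) (h1 : Even (a + c)) (h2 : Even (a - c))
    (A : Matrix (Fin 2) (Fin 2) ℂ) (w : Circle) :
    Matrix.diagonal ![(((w ^ 2 : Circle) ^ a : Circle) : ℂ), 1] * A *
      (Matrix.diagonal ![(((w ^ 2 : Circle) ^ ((a + c) / 2) : Circle) : ℂ),
        (((w ^ 2 : Circle) ^ ((a - c) / 2) : Circle) : ℂ)])⁻¹ =
    DMat (w ^ a) * A * (DMat (w ^ c))⁻¹ := by
  obtain ⟨k, hk⟩ := h1
  obtain ⟨m, hm⟩ := h2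
  have hk' : (a + c) / 2 = k := by omega
  have hm' : (a - c) / 2 = m := by omega
  have h2z : (w ^ 2 : Circle) = w ^ (2 : ℤ) := by norm_cast
  have hpow : ∀ n : ℤ, ((w ^ 2 : Circle) ^ n : Circle) = w ^ (2 * n) := by
    intro n; rw [h2z, ← _root_.zpow_mul]
  have hone : (1 : ℂ) = ((w ^ (0 : ℤ) : Circle) : ℂ) := by norm_num
  have hinvc : ∀ n : ℤ, (w ^ n)⁻¹ = w ^ (-n) := fun n => (zpow_neg w n).symm
  rw [hk', hm', DMat_eq (w ^ a), DMat_eq (w ^ c), diag2_inv, diag2_inv]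
  simp only [hpow, hinvc, inv_inv, hone]
  ext i j
  fin_cases i <;> fin_cases j <;>
    · simp only [Matrix.diagonal_mul, Matrix.mul_diagonal, Matrix.cons_val_zero,
        Matrix.cons_val_one, Matrix.head_cons]
      exact scalar_shift w _ _ _ _ _ (by omega)

lemma conj_mem (u v : Circle) (A : Matrix (Fin 2) (Fin 2) ℂ)
    (hA : A ∈ Matrix.specialUnitaryGroup (Fin 2) ℂ) :
    DMat u * A * (DMat v)⁻¹ ∈ Matrix.specialUnitaryGroup (Fin 2) ℂ := by
  rw [DMat_inv]
  exact mul_mem (mul_mem (DMat_mem u) hA) (DMat_mem v⁻¹)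

/-- Suppose `a ± c` and `b ± d` are all even.  Through any point
`(A, B) ∈ SU(2) × SU(2)`, the orbit of the `S¹` action on `U(2) × U(2)`
`z ∗ (A, B) = (diag(z^a, 1)·A·diag(z^((a+c)/2), z^((a−c)/2))⁻¹,
               diag(z^b, 1)·B·diag(z^((b+d)/2), z^((b−d)/2))⁻¹)`
coincides with the orbit of the action
`z ∗ (A, B) = (D(z^a)·A·D(z^c)⁻¹, D(z^b)·B·D(z^d)⁻¹)`; in particular this orbit
is contained in `SU(2) × SU(2)`. -/
theorem orbits_coincide_on_SU2 (a b c d : ℤ)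
    (h1 : Even (a + c)) (h2 : Even (a - c)) (h3 : Even (b + d)) (h4 : Even (b - d))
    (A B : Matrix (Fin 2) (Fin 2) ℂ)
    (hA : A ∈ Matrix.specialUnitaryGroup (Fin 2) ℂ)
    (hB : B ∈ Matrix.specialUnitaryGroup (Fin 2) ℂ) :
    ({P : Matrix (Fin 2) (Fin 2) ℂ × Matrix (Fin 2) (Fin 2) ℂ | ∃ z : Circle,
        P = (Matrix.diagonal ![((z ^ a : Circle) : ℂ), 1] * A *
              (Matrix.diagonal ![((z ^ ((a + c) / 2) : Circle) : ℂ),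
                ((z ^ ((a - c) / 2) : Circle) : ℂ)])⁻¹,
             Matrix.diagonal ![((z ^ b : Circle) : ℂ), 1] * B *
              (Matrix.diagonal ![((z ^ ((b + d) / 2) : Circle) : ℂ),
                ((z ^ ((b - d) / 2) : Circle) : ℂ)])⁻¹)} =
      {P : Matrix (Fin 2) (Fin 2) ℂ × Matrix (Fin 2) (Fin 2) ℂ | ∃ z : Circle,
        P = (DMat (z ^ a) * A * (DMat (z ^ c))⁻¹, DMat (z ^ b) * B * (DMat (z ^ d))⁻¹)}) ∧
    (∀ P : Matrix (Fin 2) (Fin 2) ℂ × Matrix (Fin 2) (Fin 2) ℂ,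
      (∃ z : Circle,
        P = (Matrix.diagonal ![((z ^ a : Circle) : ℂ), 1] * A *
              (Matrix.diagonal ![((z ^ ((a + c) / 2) : Circle) : ℂ),
                ((z ^ ((a - c) / 2) : Circle) : ℂ)])⁻¹,
             Matrix.diagonal ![((z ^ b : Circle) : ℂ), 1] * B *
              (Matrix.diagonal ![((z ^ ((b + d) / 2) : Circle) : ℂ),
                ((z ^ ((b - d) / 2) : Circle) : ℂ)])⁻¹)) →
      P.1 ∈ Matrix.specialUnitaryGroup (Fin 2) ℂ ∧
        P.2 ∈ Matrix.specialUnitaryGroup (Fin 2) ℂ) := by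
  constructor
  · ext P
    simp only [Set.mem_setOf_eq]
    constructor
    · rintro ⟨z, rfl⟩
      obtain ⟨w, hw⟩ := sq_surj z
      exact ⟨w, by rw [← hw, key_s18 a c h1 h2 A w, key_s18 b d h3 h4 B w]⟩
    · rintro ⟨w, rfl⟩
      exact ⟨w ^ 2, by rw [key_s18 a c h1 h2 A w, key_s18 b d h3 h4 B w]⟩
  · rintro P ⟨z, hP⟩
    obtain ⟨w, hw⟩ := sq_surj z
    rw [← hw, key_s18 a c h1 h2 A w, key_s18 b d h3 h4 B w] at hP
    rw [hP]
    exact ⟨conj_mem _ _ A hA, conj_mem _ _ B hB⟩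
end
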